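/- arXiv:1911.00619 — 4 statements merged into one kernel-verified Lean document; each statement's English description precedes it below -/
import Mathlib

section
/- Let p = N(ν, γ²) on ℝ, let Y ⊆ ℝ be a measurable set with μ := ∫_Y p(z) dz > 0, and let q* = 1_Y · p / μ be the truncated density with mean ν_T and variance γ_T². Let q be the posterior density proportional to exp(−(y−z)²/(2σ²)) p(z). Then the KL divergence satisfies D_KL(q* ‖ q) = ((y − ν_T)² + γ_T²)/(2σ²) − (y − ν)²/(2(σ² + γ²)) + (1/2) log(σ²/(σ² + γ²)) − log μ. -/
open Real MeasureTheory

lemma aux_pow_gauss_integrable {b : ℝ} (hb : 0 < b) (ν : ℝ) (n : ℕ) :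
    Integrable fun z : ℝ => z ^ n * Real.exp (-b * (z - ν) ^ 2) := by
  have hg : Integrable fun u : ℝ => (u + ν) ^ n * Real.exp (-b * u ^ 2) := by
    have h : ∀ k : ℕ, Integrable fun u : ℝ => u ^ k * Real.exp (-b * u ^ 2) := by
      intro k
      have := integrable_rpow_mul_exp_neg_mul_sq hb (s := (k : ℝ))
        (lt_of_lt_of_le neg_one_lt_zero (Nat.cast_nonneg k))
      simpa [Real.rpow_natCast] using this
    have hsum : Integrable fun u : ℝ =>
        ∑ k ∈ Finset.range (n + 1),
          (u ^ k * Real.exp (-b * u ^ 2)) * (ν ^ (n - k) * (n.choose k)) := by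
      apply integrable_finset_sum
      intro k _
      exact (h k).mul_const _
    refine hsum.congr (Filter.Eventually.of_forall fun u => ?_)
    simp only
    rw [add_pow, Finset.sum_mul]
    apply Finset.sum_congr rfl
    intro k _
    ring
  have := hg.comp_sub_right ν
  refine this.congr (Filter.Eventually.of_forall fun z => ?_)
  simp

/-- KL divergence between the truncated Gaussian `q* = 1_Y · p / μ` and the Gaussian
posterior `q(z) ∝ exp(-(y-z)²/(2σ²)) p(z)`:
`D_KL(q*‖q) = ((y-ν_T)² + γ_T²)/(2σ²) - (y-ν)²/(2(σ²+γ²)) + ½ log(σ²/(σ²+γ²)) - log μ`. -/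
theorem kl_truncated_posterior (ν y γ σ : ℝ) (hγ : 0 < γ) (hσ : 0 < σ)
    (Y : Set ℝ) (hY : MeasurableSet Y)
    (p : ℝ → ℝ)
    (hp : p = fun t => (Real.sqrt (2 * π * γ ^ 2))⁻¹ * exp (-(t - ν) ^ 2 / (2 * γ ^ 2)))
    (μ νT γT2 py : ℝ)
    (hμ : μ = ∫ z in Y, p z) (hμpos : 0 < μ)
    (hνT : νT = μ⁻¹ * ∫ z in Y, z * p z)
    (hγT2 : γT2 = μ⁻¹ * (∫ z in Y, z ^ 2 * p z) - νT ^ 2)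
    (hpy : py = (Real.sqrt (2 * π * (σ ^ 2 + γ ^ 2)))⁻¹ *
      exp (-(y - ν) ^ 2 / (2 * (σ ^ 2 + γ ^ 2))))
    (q : ℝ → ℝ)
    (hq : q = fun t =>
      (Real.sqrt (2 * π * σ ^ 2))⁻¹ * exp (-(y - t) ^ 2 / (2 * σ ^ 2)) * p t / py) :
    (∫ z in Y, (p z / μ) * Real.log ((p z / μ) / q z)) =
      ((y - νT) ^ 2 + γT2) / (2 * σ ^ 2) - (y - ν) ^ 2 / (2 * (σ ^ 2 + γ ^ 2))
        + (1 / 2) * Real.log (σ ^ 2 / (σ ^ 2 + γ ^ 2)) - Real.log μ := by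
  have hπ : (0:ℝ) < π := Real.pi_pos
  have hγ2 : (0:ℝ) < 2 * π * γ ^ 2 := by positivity
  have hσ2 : (0:ℝ) < 2 * π * σ ^ 2 := by positivity
  have hS : (0:ℝ) < σ ^ 2 + γ ^ 2 := by positivity
  have hcγ : (0:ℝ) < (Real.sqrt (2 * π * γ ^ 2))⁻¹ := by positivity
  have hcσpos : (0:ℝ) < Real.sqrt (2 * π * σ ^ 2) := Real.sqrt_pos.mpr hσ2
  have hppos : ∀ z, 0 < p z := by
    intro z; rw [hp]; positivity
  have hpypos : 0 < py := by rw [hpy]; positivity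
  have hb : (0:ℝ) < (2 * γ ^ 2)⁻¹ := by positivity
  -- integrability of z^n * p z on Y
  have hintn : ∀ n : ℕ, IntegrableOn (fun z : ℝ => z ^ n * p z) Y := by
    intro n
    have h1 := (aux_pow_gauss_integrable hb ν n).const_mul ((Real.sqrt (2 * π * γ ^ 2))⁻¹)
    have h2 : Integrable (fun z : ℝ => z ^ n * p z) := by
      refine h1.congr (Filter.Eventually.of_forall fun z => ?_)
      rw [hp]
      simp only
      rw [neg_div, div_eq_inv_mul, ← neg_mul]
      ring
    exact h2.integrableOn
  have hint0 : IntegrableOn p Y := by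
    have := hintn 0
    simpa using this
  have hint1 : IntegrableOn (fun z : ℝ => z * p z) Y := by
    have := hintn 1
    simpa using this
  have hint2 : IntegrableOn (fun z : ℝ => z ^ 2 * p z) Y := hintn 2
  -- the constant A
  set A : ℝ := Real.log py + Real.log (Real.sqrt (2 * π * σ ^ 2)) - Real.log μ with hA
  -- pointwise identity for the log
  have hlog : ∀ z : ℝ, Real.log ((p z / μ) / q z) = A + (y - z) ^ 2 / (2 * σ ^ 2) := by
    intro z
    have hE : (0:ℝ) < Real.exp (-(y - z) ^ 2 / (2 * σ ^ 2)) := Real.exp_pos _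
    have key : (p z / μ) / q z =
        py * Real.sqrt (2 * π * σ ^ 2) * Real.exp ((y - z) ^ 2 / (2 * σ ^ 2)) / μ := by
      have hpz := (hppos z).ne'
      have hμne := hμpos.ne'
      have hpyne := hpypos.ne'
      have hcne := hcσpos.ne'
      rw [hq]
      simp only
      rw [neg_div, Real.exp_neg]
      field_simp
    rw [key]
    rw [Real.log_div (by positivity) (ne_of_gt hμpos),
      Real.log_mul (by positivity) (Real.exp_ne_zero _),
      Real.log_mul (ne_of_gt hpypos) (ne_of_gt hcσpos), Real.log_exp, hA]
    ring
  -- rewrite the integrand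
  have hintegrand : ∀ z : ℝ, (p z / μ) * Real.log ((p z / μ) / q z) =
      (μ⁻¹ * A + μ⁻¹ * (2 * σ ^ 2)⁻¹ * y ^ 2) * p z
        + (-(μ⁻¹ * (2 * σ ^ 2)⁻¹ * (2 * y))) * (z * p z)
        + (μ⁻¹ * (2 * σ ^ 2)⁻¹) * (z ^ 2 * p z) := by
    intro z
    rw [hlog z]
    have : (y - z) ^ 2 / (2 * σ ^ 2) = (2 * σ ^ 2)⁻¹ * (y ^ 2 - 2 * y * z + z ^ 2) := by
      rw [div_eq_inv_mul]; ring_nf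
    rw [this]
    field_simp
    ring
  have hI : (∫ z in Y, (p z / μ) * Real.log ((p z / μ) / q z)) =
      (μ⁻¹ * A + μ⁻¹ * (2 * σ ^ 2)⁻¹ * y ^ 2) * (∫ z in Y, p z)
        + (-(μ⁻¹ * (2 * σ ^ 2)⁻¹ * (2 * y))) * (∫ z in Y, z * p z)
        + (μ⁻¹ * (2 * σ ^ 2)⁻¹) * (∫ z in Y, z ^ 2 * p z) := by
    simp_rw [hintegrand]
    have h01 : IntegrableOn (fun z : ℝ =>
        (μ⁻¹ * A + μ⁻¹ * (2 * σ ^ 2)⁻¹ * y ^ 2) * p z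
          + (-(μ⁻¹ * (2 * σ ^ 2)⁻¹ * (2 * y))) * (z * p z)) Y := by
      exact (hint0.const_mul _).add (hint1.const_mul _)
    have h2' : IntegrableOn (fun z : ℝ =>
        (μ⁻¹ * (2 * σ ^ 2)⁻¹) * (z ^ 2 * p z)) Y := hint2.const_mul _
    rw [integral_add h01 h2',
      integral_add (hint0.const_mul _) (hint1.const_mul _),
      integral_const_mul, integral_const_mul, integral_const_mul]
  rw [hI, ← hμ]
  have hI1 : (∫ z in Y, z * p z) = μ * νT := by
    rw [hνT]; field_simp
  have hI2 : (∫ z in Y, z ^ 2 * p z) = μ * (γT2 + νT ^ 2) := by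
    rw [hγT2]; field_simp; ring
  rw [hI1, hI2]
  -- compute A
  have hlogpy : Real.log py =
      -(1/2) * Real.log (2 * π * (σ ^ 2 + γ ^ 2)) + (-(y - ν) ^ 2 / (2 * (σ ^ 2 + γ ^ 2))) := by
    rw [hpy, Real.log_mul (by positivity) (ne_of_gt (Real.exp_pos _)), Real.log_exp,
      Real.log_inv, Real.log_sqrt (by positivity)]
    ring
  have hlogsσ : Real.log (Real.sqrt (2 * π * σ ^ 2)) = (1/2) * Real.log (2 * π * σ ^ 2) := by
    rw [Real.log_sqrt (le_of_lt hσ2)]; ring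
  have hsplit1 : Real.log (2 * π * σ ^ 2) = Real.log (2 * π) + Real.log (σ ^ 2) := by
    rw [Real.log_mul (by positivity) (by positivity)]
  have hsplit2 : Real.log (2 * π * (σ ^ 2 + γ ^ 2)) =
      Real.log (2 * π) + Real.log (σ ^ 2 + γ ^ 2) := by
    rw [Real.log_mul (by positivity) (ne_of_gt hS)]
  have hsplit3 : Real.log (σ ^ 2 / (σ ^ 2 + γ ^ 2)) =
      Real.log (σ ^ 2) - Real.log (σ ^ 2 + γ ^ 2) := by
    rw [Real.log_div (by positivity) (ne_of_gt hS)]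
  rw [hA, hlogpy, hlogsσ, hsplit1, hsplit2, hsplit3]
  have hμne : μ ≠ 0 := ne_of_gt hμpos
  field_simp
  ring
end

section
/- Fix ν, ν_T, γ, γ_T with 0 < γ_T < γ. The function F(y, σ²) = ((y − ν_T)² + γ_T²)/(2σ²) − (y − ν)²/(2(σ² + γ²)) + (1/2) log(σ²/(σ² + γ²)) over (y, σ²) ∈ ℝ × (0, ∞) attains its minimum at y* = (ν_T γ² − ν γ_T²)/(γ² − γ_T²) and σ*² = γ_T² γ²/(γ² − γ_T²). -/
open Real

lemma kl_aux (ν νT γ γT : ℝ) (hγT : 0 < γT) (hγ : γT < γ) (y s2 : ℝ) (hs2 : 0 < s2) :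
    ((((νT * γ ^ 2 - ν * γT ^ 2) / (γ ^ 2 - γT ^ 2)) - νT) ^ 2 + γT ^ 2) /
        (2 * (γT ^ 2 * γ ^ 2 / (γ ^ 2 - γT ^ 2)))
      - (((νT * γ ^ 2 - ν * γT ^ 2) / (γ ^ 2 - γT ^ 2)) - ν) ^ 2 /
        (2 * ((γT ^ 2 * γ ^ 2 / (γ ^ 2 - γT ^ 2)) + γ ^ 2))
      + (1 / 2) * Real.log ((γT ^ 2 * γ ^ 2 / (γ ^ 2 - γT ^ 2)) /
          ((γT ^ 2 * γ ^ 2 / (γ ^ 2 - γT ^ 2)) + γ ^ 2))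
    ≤ ((y - νT) ^ 2 + γT ^ 2) / (2 * s2) - (y - ν) ^ 2 / (2 * (s2 + γ ^ 2))
        + (1 / 2) * Real.log (s2 / (s2 + γ ^ 2)) := by
  have hγ0 : 0 < γ := hγT.trans hγ
  have hd : 0 < γ ^ 2 - γT ^ 2 := by nlinarith
  set S : ℝ := γT ^ 2 * γ ^ 2 / (γ ^ 2 - γT ^ 2) with hS
  have hS0 : 0 < S := div_pos (by positivity) hd
  have hS' : 0 < S + γ ^ 2 := by positivity
  have hs2' : 0 < s2 + γ ^ 2 := by positivity
  set A : ℝ := S * (s2 + γ ^ 2) / (s2 * (S + γ ^ 2)) with hA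
  have hA0 : 0 < A := by positivity
  have hlog : Real.log A ≤ A - 1 := Real.log_le_sub_one_of_pos hA0
  have hlogA : Real.log A = Real.log S + Real.log (s2 + γ ^ 2) - Real.log s2 - Real.log (S + γ ^ 2) := by
    rw [hA, Real.log_div (by positivity) (by positivity),
      Real.log_mul hS0.ne' hs2'.ne', Real.log_mul hs2.ne' hS'.ne']
    ring
  have hl1 : Real.log (S / (S + γ ^ 2)) = Real.log S - Real.log (S + γ ^ 2) :=
    Real.log_div hS0.ne' hS'.ne'
  have hl2 : Real.log (s2 / (s2 + γ ^ 2)) = Real.log s2 - Real.log (s2 + γ ^ 2) :=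
    Real.log_div hs2.ne' hs2'.ne'
  have key : ((y - νT) ^ 2 + γT ^ 2) / (2 * s2) - (y - ν) ^ 2 / (2 * (s2 + γ ^ 2))
      - (((((νT * γ ^ 2 - ν * γT ^ 2) / (γ ^ 2 - γT ^ 2)) - νT) ^ 2 + γT ^ 2) / (2 * S)
        - (((νT * γ ^ 2 - ν * γT ^ 2) / (γ ^ 2 - γT ^ 2)) - ν) ^ 2 / (2 * (S + γ ^ 2)))
      - (A - 1) / 2
      = γ ^ 2 * (y - (νT * (s2 + γ ^ 2) - ν * s2) / γ ^ 2) ^ 2 / (2 * s2 * (s2 + γ ^ 2)) := by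
    rw [hA, hS]
    field_simp
    ring
  have hnn : 0 ≤ γ ^ 2 * (y - (νT * (s2 + γ ^ 2) - ν * s2) / γ ^ 2) ^ 2 / (2 * s2 * (s2 + γ ^ 2)) := by
    positivity
  rw [hl1, hl2]
  linarith [key, hlog, hnn]

/-- The function
`F(y, s2) = ((y-ν_T)² + γ_T²)/(2 s2) - (y-ν)²/(2(s2+γ²)) + ½ log(s2/(s2+γ²))`
over `(y, s2) ∈ ℝ × (0, ∞)` attains its minimum at
`y* = (ν_T γ² - ν γ_T²)/(γ² - γ_T²)`, `s2* = γ_T² γ²/(γ² - γ_T²)`. -/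
theorem kl_parameters_minimizer (ν νT γ γT : ℝ) (hγT : 0 < γT) (hγ : γT < γ) :
    let F : ℝ → ℝ → ℝ := fun y s2 =>
      ((y - νT) ^ 2 + γT ^ 2) / (2 * s2) - (y - ν) ^ 2 / (2 * (s2 + γ ^ 2))
        + (1 / 2) * Real.log (s2 / (s2 + γ ^ 2))
    let ystar : ℝ := (νT * γ ^ 2 - ν * γT ^ 2) / (γ ^ 2 - γT ^ 2)
    let s2star : ℝ := γT ^ 2 * γ ^ 2 / (γ ^ 2 - γT ^ 2)
    ∀ y s2 : ℝ, 0 < s2 → F ystar s2star ≤ F y s2 := by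
  intro F ystar s2star y s2 hs2
  exact kl_aux ν νT γ γT hγT hγ y s2 hs2
end

section
/- The variance of a standard normal distribution truncated to a nonempty interval [a, b] (with a < b, possibly infinite endpoints but not both infinite unless the interval is proper) is strictly less than 1. -/
open MeasureTheory ProbabilityTheory Real Filter Set

noncomputable def pdfG (x : ℝ) : ℝ := gaussianPDFReal 0 1 x

lemma pdfG_eq (x : ℝ) : pdfG x = (Real.sqrt (2 * π))⁻¹ * Real.exp (-(2⁻¹) * x ^ 2) := by
  rw [pdfG, gaussianPDFReal]
  norm_num [show -x^2/2 = -(2⁻¹)*x^2 by ring]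

lemma pdfG_pos (x : ℝ) : 0 < pdfG x := gaussianPDFReal_pos 0 1 x one_ne_zero

lemma continuous_pdfG : Continuous pdfG := by
  have : pdfG = fun x => (Real.sqrt (2 * π))⁻¹ * Real.exp (-(2⁻¹) * x ^ 2) := funext pdfG_eq
  rw [this]; fun_prop

lemma measurable_pdfG : Measurable pdfG := continuous_pdfG.measurable

lemma hasDerivAt_pdfG (x : ℝ) : HasDerivAt pdfG (-x * pdfG x) x := by
  have h : HasDerivAt (fun y : ℝ => (Real.sqrt (2 * π))⁻¹ * Real.exp (-(2⁻¹) * y ^ 2))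
      ((Real.exp (-(2⁻¹) * x ^ 2) * (-(2⁻¹) * (2 * x ^ 1))) * (Real.sqrt (2 * π))⁻¹) x := by
    simpa [mul_comm] using (((hasDerivAt_pow 2 x).const_mul (-(2⁻¹ : ℝ))).exp).const_mul
      (Real.sqrt (2 * π))⁻¹
  have he : pdfG = fun y => (Real.sqrt (2 * π))⁻¹ * Real.exp (-(2⁻¹) * y ^ 2) := funext pdfG_eq
  rw [he]
  convert h using 1
  simp only []
  ring

lemma integrable_poly_pdfG (p q c : ℝ) :
    Integrable (fun x => (p * x ^ 2 + q * x + c) * pdfG x) volume := by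
  have h2 : Integrable (fun x : ℝ => x ^ 2 * Real.exp (-(2⁻¹) * x ^ 2)) volume := by
    have := integrable_rpow_mul_exp_neg_mul_sq (b := 2⁻¹) (by norm_num) (s := 2) (by norm_num)
    simpa [Real.rpow_two] using this
  have h1 : Integrable (fun x : ℝ => x * Real.exp (-(2⁻¹) * x ^ 2)) volume :=
    integrable_mul_exp_neg_mul_sq (by norm_num)
  have h0 : Integrable (fun x : ℝ => Real.exp (-(2⁻¹) * x ^ 2)) volume :=
    integrable_exp_neg_mul_sq (by norm_num)
  have := (((h2.const_mul p).add (h1.const_mul q)).add (h0.const_mul c)).const_mul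
    (Real.sqrt (2 * π))⁻¹
  refine this.congr (Eventually.of_forall fun x => ?_)
  simp only [Pi.add_apply, pdfG_eq]; ring

lemma gaussG_eq : (gaussianReal 0 1) = volume.withDensity (fun x => ((pdfG x).toNNReal : ENNReal)) := by
  rw [gaussianReal_of_var_ne_zero 0 one_ne_zero]; rfl

lemma setIntegral_gaussG {s : Set ℝ} (hs : MeasurableSet s) (f : ℝ → ℝ) :
    ∫ x in s, f x ∂(gaussianReal 0 1) = ∫ x in s, f x * pdfG x := by
  rw [gaussG_eq, restrict_withDensity hs,
    integral_withDensity_eq_integral_smul (measurable_pdfG.real_toNNReal)]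
  refine integral_congr_ae (Eventually.of_forall fun x => ?_)
  simp [NNReal.smul_def, Real.coe_toNNReal _ (pdfG_pos x).le, mul_comm]

lemma integrable_gaussG (f : ℝ → ℝ) (hf : Integrable (fun x => f x * pdfG x) volume) :
    Integrable f (gaussianReal 0 1) := by
  rw [gaussG_eq, integrable_withDensity_iff_integrable_smul measurable_pdfG.real_toNNReal]
  refine hf.congr (Eventually.of_forall fun x => ?_)
  simp [NNReal.smul_def, Real.coe_toNNReal _ (pdfG_pos x).le, mul_comm]

lemma integrable_id_gaussG : Integrable (fun x : ℝ => x) (gaussianReal 0 1) := by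
  refine integrable_gaussG _ ?_
  refine (integrable_poly_pdfG 0 1 0).congr (Eventually.of_forall fun x => ?_)
  ring_nf

lemma integrable_sq_gaussG : Integrable (fun x : ℝ => x ^ 2) (gaussianReal 0 1) := by
  refine integrable_gaussG _ ?_
  refine (integrable_poly_pdfG 1 0 0).congr (Eventually.of_forall fun x => ?_)
  ring_nf

lemma condG_def (s : Set ℝ) :
    (gaussianReal 0 1)[|s] = ((gaussianReal 0 1) s)⁻¹ • (gaussianReal 0 1).restrict s := rfl

lemma integrable_condG {s : Set ℝ} (hpos : 0 < gaussianReal 0 1 s) {f : ℝ → ℝ}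
    (hf : Integrable f (gaussianReal 0 1)) : Integrable f ((gaussianReal 0 1)[|s]) := by
  rw [condG_def]
  exact (hf.restrict).smul_measure (ENNReal.inv_ne_top.2 hpos.ne')

lemma pdfG_even (x : ℝ) : pdfG (-x) = pdfG x := by
  rw [pdfG_eq, pdfG_eq, neg_pow]; norm_num

lemma tendsto_pdfG_atTop : Tendsto pdfG atTop (nhds 0) := by
  have he : pdfG = fun y => (Real.sqrt (2 * π))⁻¹ * Real.exp (-(2⁻¹) * y ^ 2) := funext pdfG_eq
  rw [he]
  rw [show (0 : ℝ) = (Real.sqrt (2 * π))⁻¹ * 0 by ring]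
  refine Tendsto.const_mul _ (Real.tendsto_exp_atBot.comp ?_)
  exact (tendsto_pow_atTop two_ne_zero).const_mul_atTop_of_neg (by norm_num)

lemma tendsto_mul_pdfG_atTop : Tendsto (fun x => x * pdfG x) atTop (nhds 0) := by
  have h := (rpow_mul_exp_neg_mul_sq_isLittleO_exp_neg (b := 2⁻¹) (by norm_num)
    (1 : ℝ)).tendsto_zero_of_tendsto (tendsto_exp_atBot.comp (tendsto_id.const_mul_atTop_of_neg (by norm_num : (-(1/2):ℝ) < 0)))
  have h' : Tendsto (fun x : ℝ => (Real.sqrt (2 * π))⁻¹ * (x ^ (1:ℝ) * Real.exp (-(2⁻¹) * x ^ 2)))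
      atTop (nhds ((Real.sqrt (2 * π))⁻¹ * 0)) := h.const_mul _
  rw [mul_zero] at h'
  refine h'.congr' ?_
  filter_upwards [eventually_ge_atTop (0:ℝ)] with x hx
  rw [Real.rpow_one, pdfG_eq]; ring

lemma tendsto_F_atTop (m : ℝ) : Tendsto (fun x => (m - x) * pdfG x) atTop (nhds 0) := by
  have h := (tendsto_pdfG_atTop.const_mul m).sub tendsto_mul_pdfG_atTop
  rw [show (m * 0 - 0 : ℝ) = 0 by ring] at h
  refine h.congr fun x => by ring

lemma tendsto_F_atBot (m : ℝ) : Tendsto (fun x => (m - x) * pdfG x) atBot (nhds 0) := by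
  have h := (tendsto_pdfG_atTop.const_mul m).add tendsto_mul_pdfG_atTop
  rw [show (m * 0 + 0 : ℝ) = 0 by ring] at h
  have h2 : Tendsto (fun x : ℝ => (m - x) * pdfG x) atBot (nhds 0) := by
    have := h.comp tendsto_neg_atBot_atTop
    refine this.congr fun x => ?_
    simp only [Function.comp_apply, pdfG_even]
    ring
  exact h2

lemma hasDerivAt_FG (m x : ℝ) :
    HasDerivAt (fun y => (m - y) * pdfG y) (((x - m) * x - 1) * pdfG x) x := by
  have h := ((hasDerivAt_const x m).sub (hasDerivAt_id x)).mul (hasDerivAt_pdfG x)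
  refine h.congr_deriv ?_
  simp only [Pi.sub_apply, id_eq]
  ring

lemma integrableOn_FG' (m : ℝ) (s : Set ℝ) :
    IntegrableOn (fun x => ((x - m) * x - 1) * pdfG x) s volume := by
  refine ((integrable_poly_pdfG 1 (-m) (-1)).congr (Eventually.of_forall fun x => ?_)).integrableOn
  ring_nf

lemma ftc_Ici (m r : ℝ) :
    ∫ x in Ici r, ((x - m) * x - 1) * pdfG x = (r - m) * pdfG r := by
  rw [integral_Ici_eq_integral_Ioi]
  rw [integral_Ioi_of_hasDerivAt_of_tendsto
    (f := fun y => (m - y) * pdfG y)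
    (((continuous_const.sub continuous_id).mul continuous_pdfG).continuousWithinAt)
    (fun x _ => hasDerivAt_FG m x) ((integrableOn_FG' m _)) (tendsto_F_atTop m)]
  ring

lemma ftc_Iic (m r : ℝ) :
    ∫ x in Iic r, ((x - m) * x - 1) * pdfG x = (m - r) * pdfG r := by
  rw [integral_Iic_of_hasDerivAt_of_tendsto
    (f := fun y => (m - y) * pdfG y)
    (((continuous_const.sub continuous_id).mul continuous_pdfG).continuousWithinAt)
    (fun x _ => hasDerivAt_FG m x) ((integrableOn_FG' m _)) (tendsto_F_atBot m)]
  ring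

lemma ftc_Icc (m r r' : ℝ) (h : r ≤ r') :
    ∫ x in Icc r r', ((x - m) * x - 1) * pdfG x
      = (m - r') * pdfG r' - (m - r) * pdfG r := by
  rw [integral_Icc_eq_integral_Ioc, ← intervalIntegral.integral_of_le h,
    intervalIntegral.integral_eq_sub_of_hasDerivAt (fun x _ => hasDerivAt_FG m x)
      ((integrable_poly_pdfG 1 (-m) (-1)).intervalIntegrable.congr ?_)]
  intro x _
  ring_nf

lemma gaussG_singleton (r : ℝ) : (gaussianReal 0 1) {r} = 0 :=
  gaussianReal_absolutelyContinuous 0 one_ne_zero (volume_singleton)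

lemma condG_ae_mem {s : Set ℝ} (hs : MeasurableSet s) :
    ∀ᵐ x ∂((gaussianReal 0 1)[|s]), x ∈ s := by
  rw [ae_iff]
  have : {x : ℝ | ¬ x ∈ s} = sᶜ := rfl
  rw [this, cond_apply hs]
  simp

lemma mean_lt_of_subset_Iic {s : Set ℝ} (hs : MeasurableSet s)
    (hpos : 0 < gaussianReal 0 1 s) (r : ℝ) (hsub : s ⊆ Iic r) :
    (∫ x, x ∂((gaussianReal 0 1)[|s])) < r := by
  set ν := (gaussianReal 0 1)[|s] with hν
  haveI : IsProbabilityMeasure ν := cond_isProbabilityMeasure hpos.ne'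
  have hint : Integrable (fun x => x) ν := integrable_condG hpos integrable_id_gaussG
  set g := fun x : ℝ => max (r - x) 0 with hg
  have hgint : Integrable g ν := ((integrable_const r).sub hint).pos_part
  have hgnn : 0 ≤ g := fun x => le_max_right _ _
  have hsupp : Function.support g = Iio r := by
    ext x
    simp only [Function.mem_support, hg, ne_eq, max_eq_right_iff, mem_Iio]
    constructor
    · intro h; by_contra hc; exact h (by linarith [not_lt.mp hc])
    · intro h hc; linarith
  have hIci : ν (Ici r) = 0 := by
    rw [hν, cond_apply hs]
    have h0 : (gaussianReal 0 1) (s ∩ Ici r) = 0 := by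
      refine measure_mono_null ?_ (gaussG_singleton r)
      intro x hx
      have := hsub hx.1
      have := hx.2
      simp only [mem_singleton_iff]
      exact le_antisymm (hsub hx.1) hx.2
    rw [h0, mul_zero]
  have hν_supp : 0 < ν (Function.support g) := by
    rw [hsupp, show Iio r = (Ici r)ᶜ by simp]
    rw [measure_compl measurableSet_Ici (measure_ne_top _ _), hIci]
    simp
  have hpos_int : 0 < ∫ x, g x ∂ν := (integral_pos_iff_support_of_nonneg hgnn hgint).2 hν_supp
  have heq : ∫ x, g x ∂ν = ∫ x, (r - x) ∂ν := by
    refine integral_congr_ae ?_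
    filter_upwards [condG_ae_mem hs] with x hx
    exact max_eq_left (by linarith [mem_Iic.mp (hsub hx)])
  have hsub_int : ∫ x, (r - x) ∂ν = r - ∫ x, x ∂ν := by
    rw [integral_sub (integrable_const r) hint, integral_const]
    simp
  rw [heq, hsub_int] at hpos_int
  linarith

lemma mean_gt_of_subset_Ici {s : Set ℝ} (hs : MeasurableSet s)
    (hpos : 0 < gaussianReal 0 1 s) (r : ℝ) (hsub : s ⊆ Ici r) :
    r < ∫ x, x ∂((gaussianReal 0 1)[|s]) := by
  set ν := (gaussianReal 0 1)[|s] with hν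
  haveI : IsProbabilityMeasure ν := cond_isProbabilityMeasure hpos.ne'
  have hint : Integrable (fun x => x) ν := integrable_condG hpos integrable_id_gaussG
  set g := fun x : ℝ => max (x - r) 0 with hg
  have hgint : Integrable g ν := (hint.sub (integrable_const r)).pos_part
  have hgnn : 0 ≤ g := fun x => le_max_right _ _
  have hsupp : Function.support g = Ioi r := by
    ext x
    simp only [Function.mem_support, hg, ne_eq, max_eq_right_iff, mem_Ioi]
    constructor
    · intro h; by_contra hc; exact h (by linarith [not_lt.mp hc])
    · intro h hc; linarith
  have hIic : ν (Iic r) = 0 := by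
    rw [hν, cond_apply hs]
    have h0 : (gaussianReal 0 1) (s ∩ Iic r) = 0 := by
      refine measure_mono_null ?_ (gaussG_singleton r)
      intro x hx
      simp only [mem_singleton_iff]
      exact le_antisymm hx.2 (hsub hx.1)
    rw [h0, mul_zero]
  have hν_supp : 0 < ν (Function.support g) := by
    rw [hsupp, show Ioi r = (Iic r)ᶜ by simp]
    rw [measure_compl measurableSet_Iic (measure_ne_top _ _), hIic]
    simp
  have hpos_int : 0 < ∫ x, g x ∂ν := (integral_pos_iff_support_of_nonneg hgnn hgint).2 hν_supp
  have heq : ∫ x, g x ∂ν = ∫ x, (x - r) ∂ν := by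
    refine integral_congr_ae ?_
    filter_upwards [condG_ae_mem hs] with x hx
    exact max_eq_left (by linarith [mem_Ici.mp (hsub hx)])
  have hsub_int : ∫ x, (x - r) ∂ν = (∫ x, x ∂ν) - r := by
    rw [integral_sub hint (integrable_const r), integral_const]
    simp
  rw [heq, hsub_int] at hpos_int
  linarith

lemma core_variance {s : Set ℝ} (hs : MeasurableSet s) (hpos : 0 < gaussianReal 0 1 s)
    (m : ℝ) (hm : m = ∫ x, x ∂((gaussianReal 0 1)[|s])) :
    variance id ((gaussianReal 0 1)[|s])
      = 1 + (((gaussianReal 0 1) s).toReal)⁻¹ * ∫ x in s, ((x - m) * x - 1) * pdfG x := by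
  set ν := (gaussianReal 0 1)[|s] with hν
  haveI : IsProbabilityMeasure ν := cond_isProbabilityMeasure hpos.ne'
  have hint1 : Integrable (fun x => x) ν := integrable_condG hpos integrable_id_gaussG
  have hint2 : Integrable (fun x : ℝ => x ^ 2) ν := integrable_condG hpos integrable_sq_gaussG
  have hmem : MemLp (id : ℝ → ℝ) 2 ν :=
    (memLp_two_iff_integrable_sq aestronglyMeasurable_id).2 hint2
  have hvar : variance id ν = (∫ x, x ^ 2 ∂ν) - m ^ 2 := by
    rw [variance_eq_sub hmem, hm]
    congr 1
  have hE : ∫ x, ((x - m) * x - 1) ∂ν = (∫ x, x ^ 2 ∂ν) - m ^ 2 - 1 := by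
    have hfun : (fun x : ℝ => (x - m) * x - 1) = fun x : ℝ => (x ^ 2 - m * x) - 1 := by
      funext x; ring
    have hmx : Integrable (fun x : ℝ => m * x) ν := hint1.const_mul m
    have h12 : Integrable (fun x : ℝ => x ^ 2 - m * x) ν := hint2.sub hmx
    rw [hfun, integral_sub h12 (integrable_const 1), integral_sub hint2 hmx, integral_const,
      integral_const_mul, ← hm]
    simp
    ring
  have hsmul : ∫ x, ((x - m) * x - 1) ∂ν
      = (((gaussianReal 0 1) s).toReal)⁻¹ * ∫ x in s, ((x - m) * x - 1) * pdfG x := by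
    rw [hν, condG_def, integral_smul_measure, ENNReal.toReal_inv, smul_eq_mul,
      ← setIntegral_gaussG hs]
  rw [hvar, ← hsmul, hE]
  ring

lemma final_Iic (r : ℝ) (hpos : 0 < (gaussianReal 0 1) (Iic r)) :
    variance id ((gaussianReal 0 1)[|Iic r]) < 1 := by
  set m := ∫ x, x ∂((gaussianReal 0 1)[|Iic r]) with hm
  have hcore := core_variance measurableSet_Iic hpos m hm
  have hmlt : m < r := mean_lt_of_subset_Iic measurableSet_Iic hpos r subset_rfl
  have hZ : 0 < (((gaussianReal 0 1) (Iic r)).toReal) :=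
    ENNReal.toReal_pos hpos.ne' (measure_ne_top _ _)
  rw [hcore, ftc_Iic m r]
  have hneg : (((gaussianReal 0 1) (Iic r)).toReal)⁻¹ * ((m - r) * pdfG r) < 0 :=
    mul_neg_of_pos_of_neg (inv_pos.2 hZ)
      (mul_neg_of_neg_of_pos (by linarith) (pdfG_pos r))
  linarith

lemma final_Ici (r : ℝ) (hpos : 0 < (gaussianReal 0 1) (Ici r)) :
    variance id ((gaussianReal 0 1)[|Ici r]) < 1 := by
  set m := ∫ x, x ∂((gaussianReal 0 1)[|Ici r]) with hm
  have hcore := core_variance measurableSet_Ici hpos m hm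
  have hmgt : r < m := mean_gt_of_subset_Ici measurableSet_Ici hpos r subset_rfl
  have hZ : 0 < (((gaussianReal 0 1) (Ici r)).toReal) :=
    ENNReal.toReal_pos hpos.ne' (measure_ne_top _ _)
  rw [hcore, ftc_Ici m r]
  have hneg : (((gaussianReal 0 1) (Ici r)).toReal)⁻¹ * ((r - m) * pdfG r) < 0 :=
    mul_neg_of_pos_of_neg (inv_pos.2 hZ)
      (mul_neg_of_neg_of_pos (by linarith) (pdfG_pos r))
  linarith

lemma final_Icc (r r' : ℝ) (hrr' : r < r') (hpos : 0 < (gaussianReal 0 1) (Icc r r')) :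
    variance id ((gaussianReal 0 1)[|Icc r r']) < 1 := by
  set m := ∫ x, x ∂((gaussianReal 0 1)[|Icc r r']) with hm
  have hcore := core_variance measurableSet_Icc hpos m hm
  have hmgt : r < m := mean_gt_of_subset_Ici measurableSet_Icc hpos r (fun x hx => hx.1)
  have hmlt : m < r' := mean_lt_of_subset_Iic measurableSet_Icc hpos r' (fun x hx => hx.2)
  have hZ : 0 < (((gaussianReal 0 1) (Icc r r')).toReal) :=
    ENNReal.toReal_pos hpos.ne' (measure_ne_top _ _)
  rw [hcore, ftc_Icc m r r' hrr'.le]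
  have hneg : (((gaussianReal 0 1) (Icc r r')).toReal)⁻¹
      * ((m - r') * pdfG r' - (m - r) * pdfG r) < 0 := by
    refine mul_neg_of_pos_of_neg (inv_pos.2 hZ) ?_
    have h1 : (m - r') * pdfG r' < 0 := mul_neg_of_neg_of_pos (by linarith) (pdfG_pos r')
    have h2 : 0 < (m - r) * pdfG r := mul_pos (by linarith) (pdfG_pos r)
    linarith
  linarith

/-- The variance of a standard normal distribution truncated to a nonempty proper
interval `[a, b]` (endpoints possibly infinite, but not both) is strictly
less than `1`. -/
theorem variance_truncated_stdNormal_lt_one (a b : EReal) (hab : a < b)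
    (hproper : a ≠ ⊥ ∨ b ≠ ⊤)
    (hpos : 0 < (gaussianReal 0 1) {x : ℝ | a ≤ (x : EReal) ∧ (x : EReal) ≤ b}) :
    variance id
      (ProbabilityTheory.cond (gaussianReal 0 1)
        {x : ℝ | a ≤ (x : EReal) ∧ (x : EReal) ≤ b}) < 1 := by
  induction a using EReal.rec with
  | top => exact absurd hab (not_top_lt)
  | bot =>
    induction b using EReal.rec with
    | bot => exact absurd hab (lt_irrefl _)
    | top => simp at hproper
    | coe r =>
      have hset : {x : ℝ | (⊥ : EReal) ≤ (x : EReal) ∧ (x : EReal) ≤ (r : EReal)} = Iic r := by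
        ext x; simp [EReal.coe_le_coe_iff]
      rw [hset] at hpos ⊢
      exact final_Iic r hpos
  | coe r =>
    induction b using EReal.rec with
    | bot => exact absurd hab (not_lt_bot)
    | top =>
      have hset : {x : ℝ | (r : EReal) ≤ (x : EReal) ∧ (x : EReal) ≤ (⊤ : EReal)} = Ici r := by
        ext x; simp [EReal.coe_le_coe_iff]
      rw [hset] at hpos ⊢
      exact final_Ici r hpos
    | coe r' =>
      have hrr' : r < r' := EReal.coe_lt_coe_iff.mp hab
      have hset : {x : ℝ | (r : EReal) ≤ (x : EReal) ∧ (x : EReal) ≤ (r' : EReal)} = Icc r r' := by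
        ext x; simp [EReal.coe_le_coe_iff]
      rw [hset] at hpos ⊢
      exact final_Icc r r' hrr' hpos
end

section
/- With y* = ‖v‖ φ_T/(1 − ω_T²) + β and σ*² = ‖v‖² ω_T²/(1 − ω_T²), where φ_T and ω_T² are the mean and variance of the truncated standard normal q₁* (and ω_T² < 1), the Bayesian posterior p(y*|x₁)p₁(x₁)/p(y*) equals the Gaussian N(φ_T, ω_T²). -/
open Real MeasureTheory

/-- With the optimal parameters `y* = ‖v‖φ_T/(1-ω_T²) + β` and
`σ*² = ‖v‖²ω_T²/(1-ω_T²)` (where `φ_T`, `ω_T²` are the mean and variance of the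
truncated standard normal, `0 < ω_T² < 1`), the Bayesian posterior
`p(y*|x₁)p₁(x₁)/p(y*)` equals the Gaussian `N(φ_T, ω_T²)`. -/
theorem optimal_posterior_is_truncated_moment_gaussian (nv β φT ωT2 : ℝ)
    (hnv : 0 < nv) (hωT2 : 0 < ωT2) (hωT2' : ωT2 < 1)
    (p₁ : ℝ → ℝ) (hp₁ : p₁ = fun t => (2 * π) ^ (-(1 : ℝ) / 2) * exp (-t ^ 2 / 2))
    (ystar σstar2 : ℝ)
    (hystar : ystar = nv * φT / (1 - ωT2) + β)
    (hσstar2 : σstar2 = nv ^ 2 * ωT2 / (1 - ωT2))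
    (lik : ℝ → ℝ)
    (hlik : lik = fun t =>
      (Real.sqrt (2 * π * σstar2))⁻¹ * exp (-(ystar - (nv * t + β)) ^ 2 / (2 * σstar2)))
    (py : ℝ) (hpy : py = ∫ t : ℝ, lik t * p₁ t) (x : ℝ) :
    lik x * p₁ x / py =
      (Real.sqrt (2 * π * ωT2))⁻¹ * exp (-(x - φT) ^ 2 / (2 * ωT2)) := by
  have h1ω : (0:ℝ) < 1 - ωT2 := by linarith
  have hσ : 0 < σstar2 := by
    rw [hσstar2]; positivity
  set D : ℝ := (Real.sqrt (2 * π * σstar2))⁻¹ * (2 * π) ^ (-(1 : ℝ) / 2) *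
      exp (-φT ^ 2 / (2 * (1 - ωT2))) with hD
  have hDpos : 0 < D := by
    have h2π : (0:ℝ) < 2 * π := by positivity
    have : (0:ℝ) < (2 * π) ^ (-(1:ℝ)/2) := Real.rpow_pos_of_pos h2π _
    have hs : 0 < Real.sqrt (2 * π * σstar2) := Real.sqrt_pos.mpr (by positivity)
    positivity
  have key : ∀ t : ℝ, lik t * p₁ t = D * exp (-(t - φT) ^ 2 / (2 * ωT2)) := by
    intro t
    rw [hlik, hp₁, hD]
    simp only
    rw [show (Real.sqrt (2 * π * σstar2))⁻¹ * exp (-(ystar - (nv * t + β)) ^ 2 / (2 * σstar2)) *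
        ((2 * π) ^ (-(1 : ℝ) / 2) * exp (-t ^ 2 / 2)) =
        (Real.sqrt (2 * π * σstar2))⁻¹ * (2 * π) ^ (-(1 : ℝ) / 2) *
        (exp (-(ystar - (nv * t + β)) ^ 2 / (2 * σstar2)) * exp (-t ^ 2 / 2)) by ring,
      ← Real.exp_add,
      show (Real.sqrt (2 * π * σstar2))⁻¹ * (2 * π) ^ (-(1 : ℝ) / 2) *
        exp (-φT ^ 2 / (2 * (1 - ωT2))) * exp (-(t - φT) ^ 2 / (2 * ωT2)) =
        (Real.sqrt (2 * π * σstar2))⁻¹ * (2 * π) ^ (-(1 : ℝ) / 2) *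
        (exp (-φT ^ 2 / (2 * (1 - ωT2))) * exp (-(t - φT) ^ 2 / (2 * ωT2))) by ring,
      ← Real.exp_add]
    congr 2
    rw [hystar, hσstar2]
    have h1ne : (1:ℝ) - ωT2 ≠ 0 := h1ω.ne'
    field_simp
    ring
  have hint : (∫ t : ℝ, exp (-(t - φT) ^ 2 / (2 * ωT2))) = Real.sqrt (2 * π * ωT2) := by
    have hshift : (∫ t : ℝ, exp (-(t - φT) ^ 2 / (2 * ωT2))) =
        ∫ t : ℝ, exp (-(1/(2*ωT2)) * t ^ 2) := by
      rw [← MeasureTheory.integral_sub_right_eq_self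
        (fun t => exp (-(1/(2*ωT2)) * t ^ 2)) φT]
      congr 1; ext t; congr 1; field_simp
    rw [hshift, integral_gaussian]
    rw [show π / (1/(2*ωT2)) = 2 * π * ωT2 by field_simp]
  have hpy' : py = D * Real.sqrt (2 * π * ωT2) := by
    rw [hpy]
    calc (∫ t : ℝ, lik t * p₁ t) = ∫ t : ℝ, D * exp (-(t - φT) ^ 2 / (2 * ωT2)) := by
          congr 1; ext t; exact key t
      _ = D * ∫ t : ℝ, exp (-(t - φT) ^ 2 / (2 * ωT2)) := integral_const_mul D _
      _ = D * Real.sqrt (2 * π * ωT2) := by rw [hint]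
  have hspos : 0 < Real.sqrt (2 * π * ωT2) := Real.sqrt_pos.mpr (by positivity)
  rw [key x, hpy']
  field_simp
end
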